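/- Let d ≥ 1 be an integer and let s : [0,∞) → ℝ be twice differentiable. Then for every x ∈ ℝ^d with x ≠ 0, the Laplacian of the function g(x) = s(‖x‖²)/‖x‖² satisfies Δg(x) = (2/‖x‖⁴) [ 2‖x‖⁴ s''(‖x‖²) + (d−4) ( ‖x‖² s'(‖x‖²) − s(‖x‖²) ) ]. -/

import Mathlib

open Set

/-- Explicit Laplacian of `g(x) = s(‖x‖²)/‖x‖²` for twice differentiable
`s : [0,∞) → ℝ` and `x ≠ 0`:
`Δg(x) = (2/‖x‖⁴)[2‖x‖⁴ s''(‖x‖²) + (d-4)(‖x‖² s'(‖x‖²) - s(‖x‖²))]`. -/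
theorem stmt6 (d : ℕ) (hd : 1 ≤ d)
    (s : ℝ → ℝ)
    (hs_diff : DifferentiableOn ℝ s (Ici 0))
    (hs'_diff : DifferentiableOn ℝ (derivWithin s (Ici 0)) (Ici 0)) :
    ∀ x : EuclideanSpace ℝ (Fin d), x ≠ 0 →
      (∑ k : Fin d,
        fderiv ℝ (fun y : EuclideanSpace ℝ (Fin d) =>
            fderiv ℝ (fun z : EuclideanSpace ℝ (Fin d) => s (‖z‖ ^ 2) / ‖z‖ ^ 2) y
              (EuclideanSpace.single k (1 : ℝ))) x
          (EuclideanSpace.single k (1 : ℝ)))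
      = 2 / ‖x‖ ^ 4 *
          (2 * ‖x‖ ^ 4 * derivWithin (derivWithin s (Ici 0)) (Ici 0) (‖x‖ ^ 2)
            + ((d : ℝ) - 4) * (‖x‖ ^ 2 * derivWithin s (Ici 0) (‖x‖ ^ 2) - s (‖x‖ ^ 2))) := by
  intro x hx
  have hxnorm : 0 < ‖x‖ := norm_pos_iff.mpr hx
  set t : ℝ := ‖x‖ ^ 2 with htdef
  have ht : (0:ℝ) < t := by positivity
  have hmem : Ici (0:ℝ) ∈ nhds t := Ici_mem_nhds ht
  -- derivWithin agrees with deriv on positive reals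
  have hagree : ∀ u : ℝ, 0 < u → derivWithin s (Ici 0) u = deriv s u := fun u hu =>
    derivWithin_of_mem_nhds (Ici_mem_nhds hu)
  have heq : derivWithin s (Ici 0) =ᶠ[nhds t] deriv s :=
    Filter.eventuallyEq_of_mem (Ioi_mem_nhds ht) (fun u hu => hagree u hu)
  -- differentiability of s at positive points
  have hs_t : ∀ u : ℝ, 0 < u → DifferentiableAt ℝ s u := fun u hu =>
    hs_diff.differentiableAt (Ici_mem_nhds hu)
  -- second derivative
  set s2 : ℝ := derivWithin (derivWithin s (Ici 0)) (Ici 0) t with hs2def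
  have hds : HasDerivAt (deriv s) s2 t := by
    have h1 : HasDerivAt (derivWithin s (Ici 0)) s2 t := by
      have h := (hs'_diff.differentiableAt hmem).hasDerivAt
      rwa [hs2def, derivWithin_of_mem_nhds hmem]
    exact h1.congr_of_eventuallyEq heq.symm
  -- the derivative of u ↦ s u / u
  set ψ : ℝ → ℝ := fun u => (deriv s u * u - s u) / u ^ 2 with hψdef
  have key : ∀ z : EuclideanSpace ℝ (Fin d), z ≠ 0 →
      HasFDerivAt (fun z : EuclideanSpace ℝ (Fin d) => s (‖z‖ ^ 2) / ‖z‖ ^ 2)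
        ((ψ (‖z‖ ^ 2)) • (2 • (innerSL ℝ z))) z := by
    intro z hz
    have hz2 : (0:ℝ) < ‖z‖ ^ 2 := by
      have : 0 < ‖z‖ := norm_pos_iff.mpr hz
      positivity
    have hq : HasFDerivAt (fun z : EuclideanSpace ℝ (Fin d) => ‖z‖ ^ 2)
        (2 • (innerSL ℝ z)) z := (hasStrictFDerivAt_norm_sq z).hasFDerivAt
    have hφ : HasDerivAt (fun u : ℝ => s u / u) (ψ (‖z‖ ^ 2)) (‖z‖ ^ 2) := by
      have h := ((hs_t _ hz2).hasDerivAt.fun_div (hasDerivAt_id (‖z‖ ^ 2)) hz2.ne')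
      refine h.congr_deriv ?_
      simp [hψdef]
    exact hφ.comp_hasFDerivAt z hq
  -- derivative of ψ at t
  set Ψ : ℝ := ((s2 * t) * t ^ 2 - (deriv s t * t - s t) * (2 * t)) / (t ^ 2) ^ 2 with hΨdef
  have hψ' : HasDerivAt ψ Ψ t := by
    have hnum : HasDerivAt (fun u : ℝ => deriv s u * u - s u)
        (s2 * t + deriv s t * 1 - deriv s t) t :=
      (hds.mul (hasDerivAt_id t)).sub (hs_t t ht).hasDerivAt
    have hden : HasDerivAt (fun u : ℝ => u ^ 2) ((2:ℕ) * t ^ (2 - 1)) t := hasDerivAt_pow 2 t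
    have h := hnum.fun_div hden (pow_ne_zero 2 ht.ne')
    refine h.congr_deriv ?_
    push_cast
    ring
  have hqx : HasFDerivAt (fun z : EuclideanSpace ℝ (Fin d) => ‖z‖ ^ 2)
      (2 • (innerSL ℝ x)) x := (hasStrictFDerivAt_norm_sq x).hasFDerivAt
  -- each second-order term
  have hterm : ∀ k : Fin d,
      fderiv ℝ (fun y : EuclideanSpace ℝ (Fin d) =>
          fderiv ℝ (fun z : EuclideanSpace ℝ (Fin d) => s (‖z‖ ^ 2) / ‖z‖ ^ 2) y
            (EuclideanSpace.single k (1 : ℝ))) x (EuclideanSpace.single k (1 : ℝ))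
        = 4 * Ψ * (x k) ^ 2 + 2 * ψ t := by
    intro k
    have hEq : (fun y : EuclideanSpace ℝ (Fin d) =>
        fderiv ℝ (fun z : EuclideanSpace ℝ (Fin d) => s (‖z‖ ^ 2) / ‖z‖ ^ 2) y
          (EuclideanSpace.single k (1 : ℝ)))
        =ᶠ[nhds x] (fun y => 2 * ψ (‖y‖ ^ 2) * y k) := by
      refine Filter.eventuallyEq_of_mem (isOpen_ne.mem_nhds hx) (fun z hz => ?_)
      rw [(key z hz).fderiv]
      simp only [ContinuousLinearMap.smul_apply, ContinuousLinearMap.coe_smul',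
        Pi.smul_apply, innerSL_apply_apply, smul_eq_mul]
      rw [real_inner_comm, EuclideanSpace.inner_single_left]
      simp
      ring
    rw [hEq.fderiv_eq]
    -- derivative of y ↦ 2 * ψ (‖y‖²) * y k
    have hc : HasFDerivAt (fun y : EuclideanSpace ℝ (Fin d) => 2 * ψ (‖y‖ ^ 2))
        ((2 * Ψ) • (2 • (innerSL ℝ x))) x := by
      have h2ψ : HasDerivAt (fun u : ℝ => 2 * ψ u) (2 * Ψ) t := hψ'.const_mul 2
      have h := h2ψ.comp_hasFDerivAt x hqx
      exact h
    have hdproj : HasFDerivAt (fun y : EuclideanSpace ℝ (Fin d) => y k)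
        (EuclideanSpace.proj k : EuclideanSpace ℝ (Fin d) →L[ℝ] ℝ) x :=
      (EuclideanSpace.proj k : EuclideanSpace ℝ (Fin d) →L[ℝ] ℝ).hasFDerivAt
    have hmul := hc.fun_mul hdproj
    rw [hmul.fderiv]
    simp only [ContinuousLinearMap.add_apply, ContinuousLinearMap.smul_apply,
      ContinuousLinearMap.coe_smul', Pi.smul_apply, innerSL_apply_apply, smul_eq_mul,
      PiLp.proj_apply, EuclideanSpace.single_apply]
    rw [real_inner_comm, EuclideanSpace.inner_single_left]
    simp
    ring
  rw [Finset.sum_congr rfl (fun k _ => hterm k)]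
  have hsum : ∑ k : Fin d, (x k) ^ 2 = t := by
    rw [htdef, EuclideanSpace.norm_eq, Real.sq_sqrt (by positivity)]
    simp [sq_abs]
  have hsplit : ∑ k : Fin d, (4 * Ψ * (x k) ^ 2 + 2 * ψ t)
      = 4 * Ψ * t + (d : ℝ) * (2 * ψ t) := by
    rw [Finset.sum_add_distrib, ← Finset.mul_sum, hsum, Finset.sum_const]
    simp [mul_comm]
  rw [hsplit]
  have h4 : ‖x‖ ^ 4 = t ^ 2 := by rw [htdef]; ring
  rw [h4, hagree t ht]
  simp only [hΨdef, hψdef]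
  field_simp
  ring
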